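/- arXiv:2106.08312 — 2 statements merged into one kernel-verified Lean document; each statement's English description precedes it below -/
import Mathlib

section
/- Let V(t) ⊂ H(t) be the divergence-free subspaces of H¹₀(Ω(t);ℝ^d) ⊂ L²(Ω(t);ℝ^d), with Ω(t) = Φ_t(Ω₀) for the flow Φ_t of a smooth divergence-free compactly supported velocity field w. For u, v ∈ C¹_V (strongly materially differentiable curves), d/dt ∫_{Ω(t)} u(t)·v(t) = ∫_{Ω(t)} (∂•_φ u)·v + u·(∂•_φ v) + ∫_{Ω(t)} u · M(t)∘Φ_t⁻¹ · v, where M(t) := DΦ_t⁻ᵀ (d/dt(DΦ_tᵀ DΦ_t)) DΦ_t⁻¹ and ∂•_φ ξ := φ_t(d/dt(φ_{−t} ξ)) with φ_t the Piola transform. -/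
open Matrix Set MeasureTheory

noncomputable def pd {d : ℕ} (j : Fin d) (f : (Fin d → ℝ) → ℝ) (x : Fin d → ℝ) : ℝ :=
  fderiv ℝ f x (Pi.single j 1)

noncomputable def jacobian {d : ℕ} (Φ : (Fin d → ℝ) → (Fin d → ℝ)) (x : Fin d → ℝ) :
    Matrix (Fin d) (Fin d) ℝ :=
  Matrix.of fun i j => pd j (fun y => Φ y i) x

noncomputable def vdiv {d : ℕ} (u : (Fin d → ℝ) → (Fin d → ℝ)) (x : Fin d → ℝ) : ℝ :=
  ∑ i, pd i (fun y => u y i) x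
lemma jac_apply {d : ℕ} {f : (Fin d → ℝ) → (Fin d → ℝ)} {x : Fin d → ℝ}
    (hf : DifferentiableAt ℝ f x) (i j : Fin d) :
    jacobian f x i j = fderiv ℝ f x (Pi.single j 1) i := by
  have h1 : HasFDerivAt (fun y => f y i)
      ((ContinuousLinearMap.proj i).comp (fderiv ℝ f x)) x :=
    hasFDerivAt_pi'.1 hf.hasFDerivAt i
  simp [jacobian, pd, h1.fderiv]

lemma jac_toMatrix {d : ℕ} {f : (Fin d → ℝ) → (Fin d → ℝ)} {x : Fin d → ℝ}
    (hf : DifferentiableAt ℝ f x) :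
    jacobian f x = LinearMap.toMatrix' (fderiv ℝ f x : (Fin d → ℝ) →ₗ[ℝ] (Fin d → ℝ)) := by
  ext i j
  rw [jac_apply hf, LinearMap.toMatrix'_apply]
  have : (Pi.single j 1 : Fin d → ℝ) = fun j' => if j' = j then 1 else 0 := by
    ext k; simp [Pi.single_apply]
  rw [this]; rfl

lemma jac_det {d : ℕ} {f : (Fin d → ℝ) → (Fin d → ℝ)} {x : Fin d → ℝ}
    (hf : DifferentiableAt ℝ f x) :
    (fderiv ℝ f x).det = (jacobian f x).det := by
  rw [jac_toMatrix hf, LinearMap.det_toMatrix']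

lemma dot_mulVec_same {d : ℕ} (A : Matrix (Fin d) (Fin d) ℝ) (x y : Fin d → ℝ) :
    (A *ᵥ x) ⬝ᵥ (A *ᵥ y) = x ⬝ᵥ ((Aᵀ * A) *ᵥ y) := by
  rw [← Matrix.mulVec_mulVec, Matrix.dotProduct_mulVec x, Matrix.vecMul_transpose]

lemma slice_contDiff {d : ℕ} {Φ : ℝ → (Fin d → ℝ) → (Fin d → ℝ)}
    (hΦreg : ContDiff ℝ 2 (fun p : ℝ × (Fin d → ℝ) => Φ p.1 p.2)) (s : ℝ) :
    ContDiff ℝ 2 (Φ s) :=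
  hΦreg.comp (contDiff_const.prodMk contDiff_id)

lemma jac_joint {d : ℕ} {Φ : ℝ → (Fin d → ℝ) → (Fin d → ℝ)}
    (hΦreg : ContDiff ℝ 2 (fun p : ℝ × (Fin d → ℝ) => Φ p.1 p.2)) (s : ℝ)
    (x : Fin d → ℝ) (i j : Fin d) :
    jacobian (Φ s) x i j
      = fderiv ℝ (fun p : ℝ × (Fin d → ℝ) => Φ p.1 p.2 i) (s, x) (0, Pi.single j 1) := by
  have hFi : ContDiff ℝ 2 (fun p : ℝ × (Fin d → ℝ) => Φ p.1 p.2 i) :=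
    contDiff_pi.1 hΦreg i
  have h2 : HasFDerivAt (fun y : Fin d → ℝ => ((s : ℝ), y))
      ((0 : (Fin d → ℝ) →L[ℝ] ℝ).prod (ContinuousLinearMap.id ℝ (Fin d → ℝ))) x :=
    (hasFDerivAt_const s x).prodMk (hasFDerivAt_id x)
  have h3 : HasFDerivAt (fun y : Fin d → ℝ => Φ s y i)
      ((fderiv ℝ (fun p : ℝ × (Fin d → ℝ) => Φ p.1 p.2 i) (s, x)).comp
        ((0 : (Fin d → ℝ) →L[ℝ] ℝ).prod (ContinuousLinearMap.id ℝ (Fin d → ℝ)))) x :=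
    ((hFi.differentiable (by norm_num) (s, x)).hasFDerivAt).comp x h2
  simp only [jacobian, Matrix.of_apply, pd, h3.fderiv]
  rfl

lemma jac_entry_contDiff {d : ℕ} {Φ : ℝ → (Fin d → ℝ) → (Fin d → ℝ)}
    (hΦreg : ContDiff ℝ 2 (fun p : ℝ × (Fin d → ℝ) => Φ p.1 p.2)) (i j : Fin d) :
    ContDiff ℝ 1 (fun p : ℝ × (Fin d → ℝ) => jacobian (Φ p.1) p.2 i j) := by
  have hFi : ContDiff ℝ 2 (fun p : ℝ × (Fin d → ℝ) => Φ p.1 p.2 i) :=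
    contDiff_pi.1 hΦreg i
  have : (fun p : ℝ × (Fin d → ℝ) => jacobian (Φ p.1) p.2 i j)
      = fun p => fderiv ℝ (fun q : ℝ × (Fin d → ℝ) => Φ q.1 q.2 i) p (0, Pi.single j 1) := by
    funext p; exact jac_joint hΦreg p.1 p.2 i j
  rw [this]
  exact (hFi.fderiv_right (by norm_num)).clm_apply contDiff_const

lemma timeDeriv_of_contDiff {d : ℕ} {g : ℝ × (Fin d → ℝ) → ℝ} (hg : ContDiff ℝ 1 g)
    (s : ℝ) (x : Fin d → ℝ) :
    HasDerivAt (fun r => g (r, x)) (fderiv ℝ g (s, x) (1, 0)) s := by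
  have h1 : HasDerivAt (fun r : ℝ => ((r : ℝ), x)) ((1:ℝ), (0 : Fin d → ℝ)) s :=
    (hasDerivAt_id s).prodMk (hasDerivAt_const s x)
  exact ((hg.differentiable one_ne_zero (s, x)).hasFDerivAt).comp_hasDerivAt s h1

lemma timeDeriv_cont {d : ℕ} {g : ℝ × (Fin d → ℝ) → ℝ} (hg : ContDiff ℝ 1 g) :
    Continuous (fun p => fderiv ℝ g p ((1:ℝ), (0 : Fin d → ℝ))) :=
  (hg.continuous_fderiv one_ne_zero).clm_apply continuous_const


/-- transport theorem for the Piola material derivative: for materially C¹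
curves u, v of divergence-free fields on the moving domain Ω(t) = Φ_t(Ω₀),
d/dt ∫ u·v = ∫ ∂•_φu·v + u·∂•_φv + ∫ u·(M∘Φ_t⁻¹)v where
M(t) = DΦ_t⁻ᵀ (d/dt(DΦ_tᵀ DΦ_t)) DΦ_t⁻¹. -/
theorem transport_theorem {d : ℕ} (T : ℝ) (hT : 0 < T)
    (Ω₀ : Set (Fin d → ℝ)) (hΩ₀ : IsOpen Ω₀) (hb₀ : Bornology.IsBounded Ω₀)
    (Φ Ψ : ℝ → (Fin d → ℝ) → (Fin d → ℝ))
    (hΦ0 : ∀ x ∈ Ω₀, Φ 0 x = x)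
    (hΨΦ : ∀ t ∈ Icc (0:ℝ) T, ∀ x ∈ Ω₀, Ψ t (Φ t x) = x)
    (hΦΨ : ∀ t ∈ Icc (0:ℝ) T, ∀ y ∈ Φ t '' Ω₀, Φ t (Ψ t y) = y)
    (hΦreg : ContDiff ℝ 2 (fun p : ℝ × (Fin d → ℝ) => Φ p.1 p.2))
    (hΨreg : ContDiff ℝ 2 (fun p : ℝ × (Fin d → ℝ) => Ψ p.1 p.2))
    (hdet : ∀ t ∈ Icc (0:ℝ) T, ∀ x ∈ Ω₀, (jacobian (Φ t) x).det = 1)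
    -- u, v are divergence free and strongly materially differentiable, with Piola
    -- material derivatives given (on Ω₀-coordinates) by U' and V':
    (u v U' V' : ℝ → (Fin d → ℝ) → (Fin d → ℝ))
    (hudiv : ∀ t ∈ Icc (0:ℝ) T, ∀ y ∈ Φ t '' Ω₀, vdiv (u t) y = 0 ∧ vdiv (v t) y = 0)
    (hU' : ∀ t ∈ Icc (0:ℝ) T, ∀ x ∈ Ω₀,
      HasDerivAt (fun s => (jacobian (Φ s) x)⁻¹ *ᵥ (u s (Φ s x))) (U' t x) t)
    (hV' : ∀ t ∈ Icc (0:ℝ) T, ∀ x ∈ Ω₀,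
      HasDerivAt (fun s => (jacobian (Φ s) x)⁻¹ *ᵥ (v s (Φ s x))) (V' t x) t)
    (hcont : Continuous (fun p : ℝ × (Fin d → ℝ) => (u p.1 p.2, v p.1 p.2, U' p.1 p.2, V' p.1 p.2)))
    -- G' is the time derivative of the Gram matrix DΦ_tᵀ DΦ_t:
    (G' : ℝ → (Fin d → ℝ) → Matrix (Fin d) (Fin d) ℝ)
    (hG' : ∀ t ∈ Icc (0:ℝ) T, ∀ x ∈ Ω₀, ∀ i j,
      HasDerivAt (fun s => ((jacobian (Φ s) x)ᵀ * jacobian (Φ s) x) i j) (G' t x i j) t) :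
    ∀ t ∈ Ioo (0:ℝ) T,
      HasDerivAt (fun s => ∫ y in Φ s '' Ω₀, ∑ i, u s y i * v s y i)
        ((∫ y in Φ t '' Ω₀, ∑ i,
            (((jacobian (Φ t) (Ψ t y)) *ᵥ (U' t (Ψ t y))) i * v t y i
              + u t y i * ((jacobian (Φ t) (Ψ t y)) *ᵥ (V' t (Ψ t y))) i))
          + ∫ y in Φ t '' Ω₀, ∑ i, u t y i *
              (((((jacobian (Φ t) (Ψ t y))⁻¹)ᵀ * G' t (Ψ t y) * (jacobian (Φ t) (Ψ t y))⁻¹)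
                *ᵥ (v t y)) i)) t := by
  intro t ht
  classical
  have htIcc : t ∈ Icc (0:ℝ) T := ⟨ht.1.le, ht.2.le⟩
  have hΦdiff : ∀ s (x : Fin d → ℝ), DifferentiableAt ℝ (Φ s) x :=
    fun s x => (slice_contDiff hΦreg s).differentiable (by norm_num) x
  -- continuity of basic data
  have hu : Continuous (fun p : ℝ × (Fin d → ℝ) => u p.1 p.2) := hcont.fst
  have hv : Continuous (fun p : ℝ × (Fin d → ℝ) => v p.1 p.2) := hcont.snd.fst
  have hU'c : Continuous (fun p : ℝ × (Fin d → ℝ) => U' p.1 p.2) := hcont.snd.snd.fst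
  have hV'c : Continuous (fun p : ℝ × (Fin d → ℝ) => V' p.1 p.2) := hcont.snd.snd.snd
  have hJcont : Continuous (fun p : ℝ × (Fin d → ℝ) => jacobian (Φ p.1) p.2) :=
    continuous_matrix fun i j => (jac_entry_contDiff hΦreg i j).continuous
  have hpair : Continuous (fun p : ℝ × (Fin d → ℝ) => (p.1, Φ p.1 p.2)) :=
    continuous_fst.prodMk hΦreg.continuous
  -- transported vector fields (with adjugate = inverse on the domain)
  set uc : ℝ × (Fin d → ℝ) → (Fin d → ℝ) :=
    fun p => (jacobian (Φ p.1) p.2).adjugate *ᵥ u p.1 (Φ p.1 p.2) with huc_def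
  set vc : ℝ × (Fin d → ℝ) → (Fin d → ℝ) :=
    fun p => (jacobian (Φ p.1) p.2).adjugate *ᵥ v p.1 (Φ p.1 p.2) with hvc_def
  have hucont : Continuous uc := hJcont.matrix_adjugate.matrix_mulVec (hu.comp hpair)
  have hvcont : Continuous vc := hJcont.matrix_adjugate.matrix_mulVec (hv.comp hpair)
  -- Gram matrix and its time derivative
  set Gm : ℝ × (Fin d → ℝ) → Matrix (Fin d) (Fin d) ℝ :=
    fun p => (jacobian (Φ p.1) p.2)ᵀ * jacobian (Φ p.1) p.2 with hGm_def
  have hGmcont : Continuous Gm := hJcont.matrix_transpose.matrix_mul hJcont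
  have hGmC1 : ∀ i j, ContDiff ℝ 1 (fun p => Gm p i j) := by
    intro i j
    have : (fun p => Gm p i j)
        = fun p : ℝ × (Fin d → ℝ) =>
            ∑ k, jacobian (Φ p.1) p.2 k i * jacobian (Φ p.1) p.2 k j := by
      funext p; simp [hGm_def, Matrix.mul_apply]
    rw [this]
    exact ContDiff.sum fun k _ =>
      (jac_entry_contDiff hΦreg k i).mul (jac_entry_contDiff hΦreg k j)
  set Gdm : ℝ × (Fin d → ℝ) → Matrix (Fin d) (Fin d) ℝ :=
    fun p => Matrix.of fun i j => fderiv ℝ (fun q => Gm q i j) p (1, 0) with hGdm_def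
  have hGdmcont : Continuous Gdm := continuous_matrix fun i j => timeDeriv_cont (hGmC1 i j)
  have hGm_deriv : ∀ (s : ℝ) (x : Fin d → ℝ) (i j : Fin d),
      HasDerivAt (fun r => Gm (r, x) i j) (Gdm (s, x) i j) s :=
    fun s x i j => timeDeriv_of_contDiff (hGmC1 i j) s x
  have hG'Gd : ∀ s ∈ Icc (0:ℝ) T, ∀ x ∈ Ω₀, G' s x = Gdm (s, x) := by
    intro s hs x hx
    ext i j
    exact (hG' s hs x hx i j).unique (hGm_deriv s x i j)
  -- determinant-one facts
  have hIsUnit : ∀ s ∈ Icc (0:ℝ) T, ∀ x ∈ Ω₀, IsUnit (jacobian (Φ s) x).det := by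
    intro s hs x hx; rw [hdet s hs x hx]; exact isUnit_one
  have hinv_adj : ∀ s ∈ Icc (0:ℝ) T, ∀ x ∈ Ω₀,
      (jacobian (Φ s) x)⁻¹ = (jacobian (Φ s) x).adjugate := by
    intro s hs x hx
    rw [Matrix.inv_def, hdet s hs x hx, Ring.inverse_one, one_smul]
  have hrec : ∀ s ∈ Icc (0:ℝ) T, ∀ x ∈ Ω₀, ∀ w : Fin d → ℝ,
      jacobian (Φ s) x *ᵥ ((jacobian (Φ s) x)⁻¹ *ᵥ w) = w := by
    intro s hs x hx w
    rw [Matrix.mulVec_mulVec, Matrix.mul_nonsing_inv _ (hIsUnit s hs x hx),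
      Matrix.one_mulVec]
  -- change of variables
  have cov : ∀ s ∈ Icc (0:ℝ) T, ∀ g : (Fin d → ℝ) → ℝ,
      (∫ y in Φ s '' Ω₀, g y) = ∫ x in Ω₀, g (Φ s x) := by
    intro s hs g
    have hf' : ∀ x ∈ Ω₀, HasFDerivWithinAt (Φ s) (fderiv ℝ (Φ s) x) Ω₀ x :=
      fun x _ => (hΦdiff s x).hasFDerivAt.hasFDerivWithinAt
    have hinj : InjOn (Φ s) Ω₀ := by
      intro a ha b hb h
      rw [← hΨΦ s hs a ha, ← hΨΦ s hs b hb, h]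
    rw [integral_image_eq_integral_abs_det_fderiv_smul volume hΩ₀.measurableSet hf' hinj g]
    apply setIntegral_congr_fun hΩ₀.measurableSet
    intro x hx
    show |(fderiv ℝ (Φ s) x).det| • g (Φ s x) = g (Φ s x)
    rw [jac_det (hΦdiff s x), hdet s hs x hx]
    simp
  -- the integrand in material coordinates and its time derivative
  set F : ℝ → (Fin d → ℝ) → ℝ :=
    fun s x => ∑ i, u s (Φ s x) i * v s (Φ s x) i with hF_def
  set F' : ℝ → (Fin d → ℝ) → ℝ := fun s x =>
    U' s x ⬝ᵥ (Gm (s, x) *ᵥ vc (s, x)) + uc (s, x) ⬝ᵥ (Gdm (s, x) *ᵥ vc (s, x))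
      + uc (s, x) ⬝ᵥ (Gm (s, x) *ᵥ V' s x) with hF'_def
  have hFcont : Continuous (fun p : ℝ × (Fin d → ℝ) => F p.1 p.2) := by
    apply continuous_finset_sum
    intro i _
    exact ((continuous_apply i).comp (hu.comp hpair)).mul
      ((continuous_apply i).comp (hv.comp hpair))
  have hF'cont : Continuous (fun p : ℝ × (Fin d → ℝ) => F' p.1 p.2) :=
    ((hU'c.dotProduct (hGmcont.matrix_mulVec hvcont)).add
      (hucont.dotProduct (hGdmcont.matrix_mulVec hvcont))).add
      (hucont.dotProduct (hGmcont.matrix_mulVec hV'c))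
  -- geometry of the time interval
  set ε : ℝ := min t (T - t) / 2 with hε_def
  have hε : 0 < ε := by
    have h1 : 0 < min t (T - t) := lt_min ht.1 (by linarith [ht.2])
    positivity
  have hballIcc : Metric.ball t ε ⊆ Icc (t - ε) (t + ε) := by
    intro s hs
    rw [Metric.mem_ball, Real.dist_eq] at hs
    have := abs_lt.1 hs
    constructor <;> linarith [this.1, this.2]
  have hIccIoo : Icc (t - ε) (t + ε) ⊆ Ioo (0:ℝ) T := by
    intro s hs
    have h1 : ε ≤ t / 2 := by
      rw [hε_def]; have := min_le_left t (T - t); linarith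
    have h2 : ε ≤ (T - t) / 2 := by
      rw [hε_def]; have := min_le_right t (T - t); linarith
    exact ⟨by linarith [hs.1, ht.1], by linarith [hs.2, ht.2]⟩
  have hballIoo : Metric.ball t ε ⊆ Ioo (0:ℝ) T := fun s hs => hIccIoo (hballIcc hs)
  -- compactness and the uniform bound
  have hclcpt : IsCompact (closure Ω₀) := hb₀.isCompact_closure
  have hK : IsCompact (Icc (t - ε) (t + ε) ×ˢ closure Ω₀) := isCompact_Icc.prod hclcpt
  obtain ⟨C, hC⟩ := hK.exists_bound_of_continuousOn hF'cont.continuousOn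
  have hvol : volume Ω₀ < ⊤ :=
    lt_of_le_of_lt (measure_mono subset_closure) hclcpt.measure_lt_top
  -- hypotheses for differentiation under the integral sign
  have hFmeas : ∀ᶠ s in nhds t, AEStronglyMeasurable (F s) (volume.restrict Ω₀) :=
    Filter.Eventually.of_forall fun s =>
      ((hFcont.comp (Continuous.prodMk_right s)).aestronglyMeasurable)
  have hFint : Integrable (F t) (volume.restrict Ω₀) :=
    (((hFcont.comp (Continuous.prodMk_right t)).continuousOn).integrableOn_compact
      hclcpt).mono_set subset_closure
  have hF'meas : AEStronglyMeasurable (F' t) (volume.restrict Ω₀) :=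
    (hF'cont.comp (Continuous.prodMk_right t)).aestronglyMeasurable
  have hbound : ∀ᵐ x ∂(volume.restrict Ω₀), ∀ s ∈ Metric.ball t ε, ‖F' s x‖ ≤ C := by
    apply ae_restrict_of_forall_mem hΩ₀.measurableSet
    intro x hx s hs
    exact hC (s, x) ⟨hballIcc hs, subset_closure hx⟩
  have hbint : Integrable (fun _ : Fin d → ℝ => C) (volume.restrict Ω₀) :=
    integrableOn_const hvol.ne
  have hdiff : ∀ᵐ x ∂(volume.restrict Ω₀), ∀ s ∈ Metric.ball t ε,
      HasDerivAt (fun r => F r x) (F' s x) s := by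
    apply ae_restrict_of_forall_mem hΩ₀.measurableSet
    intro x hx s hs
    have hsIoo : s ∈ Ioo (0:ℝ) T := hballIoo hs
    have hsIcc : s ∈ Icc (0:ℝ) T := ⟨hsIoo.1.le, hsIoo.2.le⟩
    have hU0 := hU' s hsIcc x hx
    have hV0 := hV' s hsIcc x hx
    have hUi := fun i => hasDerivAt_pi.1 hU0 i
    have hVi := fun i => hasDerivAt_pi.1 hV0 i
    have hg : HasDerivAt
        (fun r => ∑ i, ((jacobian (Φ r) x)⁻¹ *ᵥ u r (Φ r x)) i *
          ∑ j, Gm (r, x) i j * ((jacobian (Φ r) x)⁻¹ *ᵥ v r (Φ r x)) j)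
        (∑ i, (U' s x i * ∑ j, Gm (s, x) i j * ((jacobian (Φ s) x)⁻¹ *ᵥ v s (Φ s x)) j
          + ((jacobian (Φ s) x)⁻¹ *ᵥ u s (Φ s x)) i *
            ∑ j, (Gdm (s, x) i j * ((jacobian (Φ s) x)⁻¹ *ᵥ v s (Φ s x)) j
              + Gm (s, x) i j * V' s x j))) s := by
      apply HasDerivAt.fun_sum
      intro i _
      exact (hUi i).mul (HasDerivAt.fun_sum fun j _ => (hGm_deriv s x i j).mul (hVi j))
    have hfun : (fun r => F r x) =ᶠ[nhds s]
        (fun r => ∑ i, ((jacobian (Φ r) x)⁻¹ *ᵥ u r (Φ r x)) i *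
          ∑ j, Gm (r, x) i j * ((jacobian (Φ r) x)⁻¹ *ᵥ v r (Φ r x)) j) := by
      filter_upwards [Ioo_mem_nhds hsIoo.1 hsIoo.2] with r hr
      have hrIcc : r ∈ Icc (0:ℝ) T := ⟨hr.1.le, hr.2.le⟩
      have h1 : u r (Φ r x) = jacobian (Φ r) x *ᵥ ((jacobian (Φ r) x)⁻¹ *ᵥ u r (Φ r x)) :=
        (hrec r hrIcc x hx _).symm
      have h2 : v r (Φ r x) = jacobian (Φ r) x *ᵥ ((jacobian (Φ r) x)⁻¹ *ᵥ v r (Φ r x)) :=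
        (hrec r hrIcc x hx _).symm
      show (∑ i, u r (Φ r x) i * v r (Φ r x) i) = _
      conv_lhs => rw [h1, h2]
      have := dot_mulVec_same (jacobian (Φ r) x)
        ((jacobian (Φ r) x)⁻¹ *ᵥ u r (Φ r x)) ((jacobian (Φ r) x)⁻¹ *ᵥ v r (Φ r x))
      simpa [dotProduct, mulVec, hGm_def] using this
    have hval : (∑ i, (U' s x i * ∑ j, Gm (s, x) i j * ((jacobian (Φ s) x)⁻¹ *ᵥ v s (Φ s x)) j
          + ((jacobian (Φ s) x)⁻¹ *ᵥ u s (Φ s x)) i *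
            ∑ j, (Gdm (s, x) i j * ((jacobian (Φ s) x)⁻¹ *ᵥ v s (Φ s x)) j
              + Gm (s, x) i j * V' s x j))) = F' s x := by
      have hu1 : uc (s, x) = (jacobian (Φ s) x)⁻¹ *ᵥ u s (Φ s x) := by
        rw [huc_def]; rw [hinv_adj s hsIcc x hx]
      have hv1 : vc (s, x) = (jacobian (Φ s) x)⁻¹ *ᵥ v s (Φ s x) := by
        rw [hvc_def]; rw [hinv_adj s hsIcc x hx]
      rw [hF'_def]
      simp only [hu1, hv1, dotProduct, mulVec, Finset.sum_add_distrib, mul_add,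
        Finset.mul_sum]
      ring
    have H := hg.congr_of_eventuallyEq hfun
    rwa [hval] at H
  have main :=
    hasDerivAt_integral_of_dominated_loc_of_deriv_le (μ := volume.restrict Ω₀)
      (F := F) (F' := F') (bound := fun _ => C) (x₀ := t) (Metric.ball_mem_nhds t hε) hFmeas hFint hF'meas
      hbound hbint hdiff
  obtain ⟨-, hder⟩ := main
  have hfeq : (fun s => ∫ y in Φ s '' Ω₀, ∑ i, u s y i * v s y i)
      =ᶠ[nhds t] (fun s => ∫ x, F s x ∂(volume.restrict Ω₀)) := by
    filter_upwards [Ioo_mem_nhds ht.1 ht.2] with s hs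
    exact cov s ⟨hs.1.le, hs.2.le⟩ (fun y => ∑ i, u s y i * v s y i)
  have H := hder.congr_of_eventuallyEq hfeq
  refine H.congr_deriv ?_
  symm
  -- it remains to identify the value of the derivative
  have hu1 : ∀ x ∈ Ω₀, uc (t, x) = (jacobian (Φ t) x)⁻¹ *ᵥ u t (Φ t x) := by
    intro x hx; rw [huc_def]; rw [hinv_adj t htIcc x hx]
  have hv1 : ∀ x ∈ Ω₀, vc (t, x) = (jacobian (Φ t) x)⁻¹ *ᵥ v t (Φ t x) := by
    intro x hx; rw [hvc_def]; rw [hinv_adj t htIcc x hx]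
  set A1 : (Fin d → ℝ) → ℝ := fun x =>
    U' t x ⬝ᵥ (Gm (t, x) *ᵥ vc (t, x)) + uc (t, x) ⬝ᵥ (Gm (t, x) *ᵥ V' t x) with hA1_def
  set A2 : (Fin d → ℝ) → ℝ := fun x =>
    uc (t, x) ⬝ᵥ (Gdm (t, x) *ᵥ vc (t, x)) with hA2_def
  have hA1cont : Continuous A1 :=
    ((hU'c.dotProduct (hGmcont.matrix_mulVec hvcont)).add
      (hucont.dotProduct (hGmcont.matrix_mulVec hV'c))).comp (Continuous.prodMk_right t)
  have hA2cont : Continuous A2 :=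
    (hucont.dotProduct (hGdmcont.matrix_mulVec hvcont)).comp (Continuous.prodMk_right t)
  have hA1int : IntegrableOn A1 Ω₀ volume :=
    (hA1cont.continuousOn.integrableOn_compact hclcpt).mono_set subset_closure
  have hA2int : IntegrableOn A2 Ω₀ volume :=
    (hA2cont.continuousOn.integrableOn_compact hclcpt).mono_set subset_closure
  have hEq1 : EqOn (fun x => ∑ i,
      (((jacobian (Φ t) (Ψ t (Φ t x))) *ᵥ (U' t (Ψ t (Φ t x)))) i * v t (Φ t x) i
        + u t (Φ t x) i * ((jacobian (Φ t) (Ψ t (Φ t x))) *ᵥ (V' t (Ψ t (Φ t x)))) i)) A1 Ω₀ := by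
    intro x hx
    have hΨx : Ψ t (Φ t x) = x := hΨΦ t htIcc x hx
    have hur : u t (Φ t x) = jacobian (Φ t) x *ᵥ ((jacobian (Φ t) x)⁻¹ *ᵥ u t (Φ t x)) :=
      (hrec t htIcc x hx _).symm
    have hvr : v t (Φ t x) = jacobian (Φ t) x *ᵥ ((jacobian (Φ t) x)⁻¹ *ᵥ v t (Φ t x)) :=
      (hrec t htIcc x hx _).symm
    show (∑ i,
      (((jacobian (Φ t) (Ψ t (Φ t x))) *ᵥ (U' t (Ψ t (Φ t x)))) i * v t (Φ t x) i
        + u t (Φ t x) i * ((jacobian (Φ t) (Ψ t (Φ t x))) *ᵥ (V' t (Ψ t (Φ t x)))) i)) = A1 x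
    rw [hΨx, Finset.sum_add_distrib]
    conv_lhs => rw [hur, hvr]
    show (jacobian (Φ t) x *ᵥ U' t x) ⬝ᵥ
        (jacobian (Φ t) x *ᵥ ((jacobian (Φ t) x)⁻¹ *ᵥ v t (Φ t x)))
      + (jacobian (Φ t) x *ᵥ ((jacobian (Φ t) x)⁻¹ *ᵥ u t (Φ t x))) ⬝ᵥ
        (jacobian (Φ t) x *ᵥ V' t x) = A1 x
    rw [dot_mulVec_same, dot_mulVec_same]
    simp only [hA1_def, hGm_def, hu1 x hx, hv1 x hx]
  have hEq2 : EqOn (fun x => ∑ i, u t (Φ t x) i *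
      (((((jacobian (Φ t) (Ψ t (Φ t x))))⁻¹ᵀ * G' t (Ψ t (Φ t x)) *
        (jacobian (Φ t) (Ψ t (Φ t x)))⁻¹) *ᵥ (v t (Φ t x))) i)) A2 Ω₀ := by
    intro x hx
    have hΨx : Ψ t (Φ t x) = x := hΨΦ t htIcc x hx
    have hur : u t (Φ t x) = jacobian (Φ t) x *ᵥ ((jacobian (Φ t) x)⁻¹ *ᵥ u t (Φ t x)) :=
      (hrec t htIcc x hx _).symm
    have hvr : v t (Φ t x) = jacobian (Φ t) x *ᵥ ((jacobian (Φ t) x)⁻¹ *ᵥ v t (Φ t x)) :=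
      (hrec t htIcc x hx _).symm
    show (∑ i, u t (Φ t x) i *
      (((((jacobian (Φ t) (Ψ t (Φ t x))))⁻¹ᵀ * G' t (Ψ t (Φ t x)) *
        (jacobian (Φ t) (Ψ t (Φ t x)))⁻¹) *ᵥ (v t (Φ t x))) i)) = A2 x
    rw [hΨx]
    conv_lhs => rw [hur, hvr]
    show (jacobian (Φ t) x *ᵥ ((jacobian (Φ t) x)⁻¹ *ᵥ u t (Φ t x))) ⬝ᵥ
      ((((jacobian (Φ t) x)⁻¹ᵀ * G' t x * (jacobian (Φ t) x)⁻¹)) *ᵥ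
        (jacobian (Φ t) x *ᵥ ((jacobian (Φ t) x)⁻¹ *ᵥ v t (Φ t x)))) = A2 x
    rw [Matrix.mulVec_mulVec _ ((jacobian (Φ t) x)⁻¹ᵀ * G' t x * (jacobian (Φ t) x)⁻¹) (jacobian (Φ t) x)]
    rw [show (jacobian (Φ t) x)⁻¹ᵀ * G' t x * (jacobian (Φ t) x)⁻¹ * jacobian (Φ t) x
        = (jacobian (Φ t) x)⁻¹ᵀ * G' t x from by
      rw [Matrix.mul_assoc ((jacobian (Φ t) x)⁻¹ᵀ * G' t x),
        Matrix.nonsing_inv_mul _ (hIsUnit t htIcc x hx), Matrix.mul_one]]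
    rw [← Matrix.mulVec_mulVec, Matrix.dotProduct_mulVec, Matrix.vecMul_transpose,
      Matrix.mulVec_mulVec, Matrix.nonsing_inv_mul _ (hIsUnit t htIcc x hx),
      Matrix.one_mulVec, hG'Gd t htIcc x hx]
    simp only [hA2_def, hu1 x hx, hv1 x hx]
  calc (∫ y in Φ t '' Ω₀, ∑ i,
            (((jacobian (Φ t) (Ψ t y)) *ᵥ (U' t (Ψ t y))) i * v t y i
              + u t y i * ((jacobian (Φ t) (Ψ t y)) *ᵥ (V' t (Ψ t y))) i))
          + ∫ y in Φ t '' Ω₀, ∑ i, u t y i *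
              (((((jacobian (Φ t) (Ψ t y))⁻¹)ᵀ * G' t (Ψ t y) * (jacobian (Φ t) (Ψ t y))⁻¹)
                *ᵥ (v t y)) i)
      = (∫ x in Ω₀, A1 x) + (∫ x in Ω₀, A2 x) := by
        rw [cov t htIcc, cov t htIcc,
          setIntegral_congr_fun hΩ₀.measurableSet hEq1,
          setIntegral_congr_fun hΩ₀.measurableSet hEq2]
    _ = ∫ x in Ω₀, (A1 x + A2 x) := (integral_add hA1int hA2int).symm
    _ = ∫ x, F' t x ∂(volume.restrict Ω₀) := by
        apply integral_congr_ae
        apply Filter.Eventually.of_forall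
        intro x
        rw [hA1_def, hA2_def, hF'_def]
        ring
end

section
/- Let Φ_t be a C¹ family of diffeomorphisms with Φ₀ = Id. For smooth η(t) : Ω₀ → ℝ^d, the strong Piola material derivative of the pushforward test function satisfies: ∂•_φ((DΦ_t⁻ᵀ η)∘Φ_t⁻¹) = DΦ_t⁻ᵀ∘Φ_t⁻¹ · (d/dt η)∘Φ_t⁻¹ + (DΦ_t · d/dt(DΦ_t⁻¹ DΦ_t⁻ᵀ) · DΦ_tᵀ)∘Φ_t⁻¹ · (DΦ_t⁻ᵀ η)∘Φ_t⁻¹. -/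
open Matrix Set MeasureTheory

/-- Piola material derivative of the covariant pushforward test function:
∂•_φ((DΦ_t⁻ᵀ η)∘Φ_t⁻¹) = DΦ_t⁻ᵀ∘Φ_t⁻¹ (dη/dt)∘Φ_t⁻¹
  + (DΦ_t d/dt(DΦ_t⁻¹DΦ_t⁻ᵀ) DΦ_tᵀ)∘Φ_t⁻¹ (DΦ_t⁻ᵀ η)∘Φ_t⁻¹. -/
theorem piola_material_derivative_covariant {d : ℕ} (T : ℝ) (hT : 0 < T)
    (Ω₀ : Set (Fin d → ℝ)) (hΩ₀ : IsOpen Ω₀)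
    (Φ Ψ : ℝ → (Fin d → ℝ) → (Fin d → ℝ))
    (hΦ0 : ∀ x ∈ Ω₀, Φ 0 x = x)
    (hΨΦ : ∀ t ∈ Icc (0:ℝ) T, ∀ x ∈ Ω₀, Ψ t (Φ t x) = x)
    (hΦΨ : ∀ t ∈ Icc (0:ℝ) T, ∀ y ∈ Φ t '' Ω₀, Φ t (Ψ t y) = y)
    (hΦreg : ContDiff ℝ 2 (fun p : ℝ × (Fin d → ℝ) => Φ p.1 p.2))
    (hU : ∀ t ∈ Icc (0:ℝ) T, ∀ x ∈ Ω₀, IsUnit (jacobian (Φ t) x))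
    (η η' : ℝ → (Fin d → ℝ) → (Fin d → ℝ))
    (hη' : ∀ t ∈ Icc (0:ℝ) T, ∀ x ∈ Ω₀, HasDerivAt (fun s => η s x) (η' t x) t)
    -- R' is the time derivative of DΦ_t⁻¹ DΦ_t⁻ᵀ:
    (R' : ℝ → (Fin d → ℝ) → Matrix (Fin d) (Fin d) ℝ)
    (hR' : ∀ t ∈ Icc (0:ℝ) T, ∀ x ∈ Ω₀, ∀ i j,
      HasDerivAt (fun s => ((jacobian (Φ s) x)⁻¹ * ((jacobian (Φ s) x)⁻¹)ᵀ) i j)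
        (R' t x i j) t)
    -- W' is the time derivative of the Piola pullback of (DΦ_t⁻ᵀ η)∘Φ_t⁻¹, which
    -- equals DΦ_t⁻¹ DΦ_t⁻ᵀ η:
    (W' : ℝ → (Fin d → ℝ) → (Fin d → ℝ))
    (hW' : ∀ t ∈ Icc (0:ℝ) T, ∀ x ∈ Ω₀,
      HasDerivAt (fun s => ((jacobian (Φ s) x)⁻¹ * ((jacobian (Φ s) x)⁻¹)ᵀ) *ᵥ (η s x))
        (W' t x) t) :
    ∀ t ∈ Icc (0:ℝ) T, ∀ y ∈ Φ t '' Ω₀,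
      (jacobian (Φ t) (Ψ t y)) *ᵥ (W' t (Ψ t y))
        = ((jacobian (Φ t) (Ψ t y))⁻¹)ᵀ *ᵥ (η' t (Ψ t y))
          + ((jacobian (Φ t) (Ψ t y)) * R' t (Ψ t y) * (jacobian (Φ t) (Ψ t y))ᵀ)
              *ᵥ (((jacobian (Φ t) (Ψ t y))⁻¹)ᵀ *ᵥ (η t (Ψ t y))) := by

  intro t ht y hy
  obtain ⟨x, hx, rfl⟩ := hy
  rw [hΨΦ t ht x hx]
  have hdet : IsUnit (jacobian (Φ t) x).det :=
    (Matrix.isUnit_iff_isUnit_det _).mp (hU t ht x hx)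
  set J := jacobian (Φ t) x with hJ
  have hJi : J * J⁻¹ = 1 := Matrix.mul_nonsing_inv _ hdet
  have hJi' : J⁻¹ * J = 1 := Matrix.nonsing_inv_mul _ hdet
  have hcomp : ∀ j, HasDerivAt (fun s => η s x j) (η' t x j) t := fun j =>
    (hasDerivAt_pi.mp (hη' t ht x hx)) j
  have h2 : HasDerivAt
      (fun s => ((jacobian (Φ s) x)⁻¹ * ((jacobian (Φ s) x)⁻¹)ᵀ) *ᵥ (η s x))
      (R' t x *ᵥ η t x + (J⁻¹ * J⁻¹ᵀ) *ᵥ η' t x) t := by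
    rw [hasDerivAt_pi]
    intro i
    have hsum : HasDerivAt
        (fun s => ∑ j, ((jacobian (Φ s) x)⁻¹ * ((jacobian (Φ s) x)⁻¹)ᵀ) i j * η s x j)
        (∑ j, (R' t x i j * η t x j + (J⁻¹ * J⁻¹ᵀ) i j * η' t x j)) t := by
      apply HasDerivAt.fun_sum
      intro j _
      exact (hR' t ht x hx i j).mul (hcomp j)
    simpa [Matrix.mulVec, dotProduct, Finset.sum_add_distrib] using hsum
  have hWeq : W' t x = R' t x *ᵥ η t x + (J⁻¹ * J⁻¹ᵀ) *ᵥ η' t x :=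
    (hW' t ht x hx).unique h2
  rw [hWeq, Matrix.mulVec_add, Matrix.mulVec_mulVec, Matrix.mulVec_mulVec,
    Matrix.mulVec_mulVec]
  have e1 : J * (J⁻¹ * J⁻¹ᵀ) = J⁻¹ᵀ := by
    rw [← Matrix.mul_assoc, hJi, Matrix.one_mul]
  have e2 : J * R' t x * Jᵀ * J⁻¹ᵀ = J * R' t x := by
    rw [Matrix.mul_assoc, ← Matrix.transpose_mul, hJi', Matrix.transpose_one,
      Matrix.mul_one]
  rw [e1, e2]
  exact add_comm _ _
end
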